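/- A cycle C_n with threshold function t has a pervading link set with k external influencers if and only if: (1) at least one node has threshold at most k, (2) every node has threshold at most k+2, and (3) between any two consecutive nodes of threshold k+2 (along the cycle), there is at least one node of threshold at most k. -/

import Mathlib

open Finset
open scoped Classical

/-- Threshold activation process: `act G t s j` is the set of nodes active at step `j`,
given link vector `s` (partial incentives from external influencers). -/
noncomputable def act {V : Type*} [Fintype V] (G : SimpleGraph V) (t s : V → ℕ) :
    ℕ → Finset V
  | 0 => Finset.univ.filter (fun v => t v ≤ s v)
  | (j+1) => act G t s j ∪ Finset.univ.filter
      (fun v => t v ≤ s v + ((act G t s j).filter (fun u => G.Adj u v)).card)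

/-- A link vector `s` is pervading for `(G, t)` with `k` external influencers if each node
receives at most `k` links and the process eventually activates every node. -/
def Pervading {V : Type*} [Fintype V] (G : SimpleGraph V) (t s : V → ℕ) (k : ℕ) : Prop :=
  (∀ v, s v ≤ k) ∧ ∃ j, act G t s j = Finset.univ

/-- The cycle graph on `ZMod n`: `i` is adjacent to `i ± 1`. -/
def cycleGraph (n : ℕ) : SimpleGraph (ZMod n) :=
  SimpleGraph.fromRel (fun i j => j = i + 1)

/-- `v` lies strictly between `i` and `j` in the clockwise direction on `ZMod n`. -/
def Between {n : ℕ} [NeZero n] (i j v : ZMod n) : Prop :=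
  0 < (v - i).val ∧ (v - i).val < (j - i).val

set_option linter.unusedSectionVars false
set_option linter.unusedVariables false

section ActLemmas
variable {V : Type*} [Fintype V] (G : SimpleGraph V) (t s : V → ℕ)

lemma mem_act_zero {v : V} : v ∈ act G t s 0 ↔ t v ≤ s v := by
  simp [act]

lemma mem_act_succ {v : V} {j : ℕ} :
    v ∈ act G t s (j+1) ↔ v ∈ act G t s j ∨
      t v ≤ s v + ((act G t s j).filter (fun u => G.Adj u v)).card := by
  simp [act]

lemma act_mono : Monotone (act G t s) := by
  apply monotone_nat_of_le_succ
  intro j v hv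
  rw [mem_act_succ]; exact Or.inl hv

end ActLemmas

section Cycle
variable {n : ℕ} [NeZero n]

lemma cycle_adj_iff {u v : ZMod n} :
    (cycleGraph n).Adj u v ↔ u ≠ v ∧ (v = u + 1 ∨ u = v + 1) := by
  simp [cycleGraph, SimpleGraph.fromRel_adj]

lemma cast_val' (x : ZMod n) : ((x.val : ℕ) : ZMod n) = x := ZMod.natCast_zmod_val x

lemma zmod_one_ne_zero (hn : 3 ≤ n) : (1 : ZMod n) ≠ 0 := by
  intro h
  have h1 : ((1:ℕ) : ZMod n).val = 1 := ZMod.val_cast_of_lt (by omega)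
  rw [Nat.cast_one, h, ZMod.val_zero] at h1
  exact absurd h1 (by omega)

lemma zmod_two_ne_zero (hn : 3 ≤ n) : (2 : ZMod n) ≠ 0 := by
  intro h
  have h1 : ((2:ℕ) : ZMod n).val = 2 := ZMod.val_cast_of_lt (by omega)
  rw [Nat.cast_ofNat, h, ZMod.val_zero] at h1
  exact absurd h1 (by omega)

lemma adj_cases {u v : ZMod n} (h : (cycleGraph n).Adj u v) : u = v - 1 ∨ u = v + 1 := by
  rcases (cycle_adj_iff.mp h).2 with h1 | h1
  · left; rw [h1]; ring
  · right; exact h1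

lemma adj_succ (hn : 3 ≤ n) (u : ZMod n) : (cycleGraph n).Adj u (u + 1) := by
  rw [cycle_adj_iff]
  refine ⟨?_, Or.inl rfl⟩
  intro h
  exact zmod_one_ne_zero hn (by linear_combination -h)

lemma adj_pred (hn : 3 ≤ n) (u : ZMod n) : (cycleGraph n).Adj u (u - 1) := by
  rw [cycle_adj_iff]
  refine ⟨?_, Or.inr (by ring)⟩
  intro h
  exact zmod_one_ne_zero hn (by linear_combination h)

lemma sub_ne_add (hn : 3 ≤ n) (v : ZMod n) : v - 1 ≠ v + 1 := by
  intro h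
  exact zmod_two_ne_zero hn (by linear_combination -h)

lemma filter_adj_subset (A : Finset (ZMod n)) (v : ZMod n) :
    A.filter (fun u => (cycleGraph n).Adj u v) ⊆ {v - 1, v + 1} := by
  intro u hu
  rw [mem_filter] at hu
  rcases adj_cases hu.2 with h | h <;> simp [h]

lemma filter_adj_card_le (A : Finset (ZMod n)) (v : ZMod n) :
    (A.filter (fun u => (cycleGraph n).Adj u v)).card ≤ 2 := by
  calc (A.filter (fun u => (cycleGraph n).Adj u v)).card
      ≤ ({v - 1, v + 1} : Finset (ZMod n)).card := card_le_card (filter_adj_subset A v)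
    _ ≤ 2 := (card_insert_le _ _).trans (by simp)

lemma both_mem_of_two_le (hn : 3 ≤ n) {A : Finset (ZMod n)} {v : ZMod n}
    (h : 2 ≤ (A.filter (fun u => (cycleGraph n).Adj u v)).card) :
    v - 1 ∈ A ∧ v + 1 ∈ A := by
  have hpair : ({v - 1, v + 1} : Finset (ZMod n)).card = 2 := by
    rw [card_insert_of_notMem (by simp [sub_ne_add hn v]), card_singleton]
  have heq := Finset.eq_of_subset_of_card_le (filter_adj_subset A v) (by omega)
  have h1 : v - 1 ∈ A.filter (fun u => (cycleGraph n).Adj u v) := by rw [heq]; simp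
  have h2 : v + 1 ∈ A.filter (fun u => (cycleGraph n).Adj u v) := by rw [heq]; simp
  exact ⟨(mem_filter.mp h1).1, (mem_filter.mp h2).1⟩

lemma val_sub_one {x : ZMod n} (h : 1 ≤ x.val) : (x - 1).val = x.val - 1 := by
  have h1 : x - 1 = (((x.val - 1 : ℕ)) : ZMod n) := by
    rw [Nat.cast_sub h, cast_val', Nat.cast_one]
  rw [h1, ZMod.val_cast_of_lt (by have := x.val_lt; omega)]

lemma val_add_one {x : ZMod n} (h : x.val + 1 < n) : (x + 1).val = x.val + 1 := by
  have h1 : x + 1 = (((x.val + 1 : ℕ)) : ZMod n) := by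
    rw [Nat.cast_add, cast_val', Nat.cast_one]
  rw [h1, ZMod.val_cast_of_lt h]

lemma val_pos_of_ne {x y : ZMod n} (h : x ≠ y) : 0 < (x - y).val := by
  rcases Nat.eq_zero_or_pos ((x - y).val) with h0 | h0
  · exact absurd (sub_eq_zero.mp ((ZMod.val_eq_zero _).mp h0)) h
  · exact h0

/-- arc membership -/
def InArc {n : ℕ} [NeZero n] (i j v : ZMod n) : Prop :=
  v = i ∨ Between i j v ∨ v = j

lemma arc_succ_left (hn : 3 ≤ n) {i j : ZMod n} (hij : i ≠ j) : InArc i j (i + 1) := by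
  have hone : ((i + 1) - i) = (1 : ZMod n) := by ring
  have hv1 : ((1 : ZMod n)).val = 1 := by
    have : ((1:ℕ) : ZMod n).val = 1 := ZMod.val_cast_of_lt (by omega)
    simpa using this
  have ha : 0 < (j - i).val := val_pos_of_ne hij.symm
  rcases eq_or_lt_of_le (by omega : 1 ≤ (j - i).val) with h1 | h1
  · right; right
    have : j - i = (1 : ZMod n) := by
      have := cast_val' (j - i)
      rw [← h1] at this
      simpa using this.symm
    linear_combination -this
  · right; left
    constructor
    · rw [hone, hv1]; omega
    · rw [hone, hv1]; omega

lemma arc_pred_right (hn : 3 ≤ n) {i j : ZMod n} (hij : i ≠ j) : InArc i j (j - 1) := by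
  have ha : 0 < (j - i).val := val_pos_of_ne hij.symm
  have hsub : (j - 1) - i = (j - i) - 1 := by ring
  have hval : ((j - 1) - i).val = (j - i).val - 1 := by rw [hsub, val_sub_one ha]
  rcases eq_or_lt_of_le (by omega : 1 ≤ (j - i).val) with h1 | h1
  · left
    have : j - i = (1 : ZMod n) := by
      have := cast_val' (j - i)
      rw [← h1] at this
      simpa using this.symm
    linear_combination this
  · right; left
    exact ⟨by omega, by omega⟩

lemma arc_between_pred {i j v : ZMod n} (h : Between i j v) : InArc i j (v - 1) := by
  obtain ⟨hb, hba⟩ := h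
  have hsub : (v - 1) - i = (v - i) - 1 := by ring
  have hval : ((v - 1) - i).val = (v - i).val - 1 := by rw [hsub, val_sub_one hb]
  rcases eq_or_lt_of_le (by omega : 1 ≤ (v - i).val) with h1 | h1
  · left
    have : v - i = (1 : ZMod n) := by
      have := cast_val' (v - i)
      rw [← h1] at this
      simpa using this.symm
    linear_combination this
  · right; left
    exact ⟨by omega, by omega⟩

lemma arc_between_succ {i j v : ZMod n} (h : Between i j v) : InArc i j (v + 1) := by
  obtain ⟨hb, hba⟩ := h
  have hlt : (v - i).val + 1 < n := by
    have := (j - i).val_lt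
    omega
  have hsub : (v + 1) - i = (v - i) + 1 := by ring
  have hval : ((v + 1) - i).val = (v - i).val + 1 := by rw [hsub, val_add_one hlt]
  rcases eq_or_lt_of_le (Nat.succ_le_of_lt hba) with h1 | h1
  · right; right
    have h2 : (v + 1) - i = j - i := by
      have e1 := cast_val' ((v + 1) - i)
      have e2 := cast_val' (j - i)
      rw [hval] at e1
      rw [show (v - i).val + 1 = (j - i).val by omega, e2] at e1
      exact e1.symm
    linear_combination h2
  · right; left
    exact ⟨by omega, by omega⟩

end Cycle

section Forward
variable {n k : ℕ} [NeZero n]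

lemma forward_dir (hn : 3 ≤ n) (t s : ZMod n → ℕ) (hsk : ∀ v, s v ≤ k)
    (j₀ : ℕ) (hj₀ : act (cycleGraph n) t s j₀ = Finset.univ) :
    (∃ v, t v ≤ k) ∧ (∀ v, t v ≤ k + 2) ∧
      (∀ i j : ZMod n, t i = k + 2 → t j = k + 2 → i ≠ j →
        (∀ v, Between i j v → t v ≠ k + 2) →
        ∃ v, Between i j v ∧ t v ≤ k) := by
  have hact : ∀ u : ZMod n, ∃ m, u ∈ act (cycleGraph n) t s m := by
    intro u; exact ⟨j₀, by rw [hj₀]; exact mem_univ u⟩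
  -- part 1
  have h1 : ∃ v, t v ≤ k := by
    by_contra hc
    push_neg at hc
    have hempty : ∀ m, act (cycleGraph n) t s m = ∅ := by
      intro m
      induction m with
      | zero =>
        rw [eq_empty_iff_forall_notMem]
        intro v hv
        rw [mem_act_zero] at hv
        exact absurd (hv.trans (hsk v)) (not_le.mpr (hc v))
      | succ m ih =>
        rw [eq_empty_iff_forall_notMem]
        intro v hv
        rw [mem_act_succ, ih] at hv
        rcases hv with hv | hv
        · simp at hv
        · simp only [filter_empty, card_empty, add_zero] at hv
          exact absurd (hv.trans (hsk v)) (not_le.mpr (hc v))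
    have := hempty j₀
    rw [hj₀] at this
    exact absurd this (by simp [← Finset.nonempty_iff_ne_empty, Finset.univ_nonempty])
  -- part 2
  have h2 : ∀ v, t v ≤ k + 2 := by
    intro v
    have hspec := Nat.find_spec (hact v)
    cases hm : Nat.find (hact v) with
    | zero =>
      rw [hm, mem_act_zero] at hspec
      have := hsk v; omega
    | succ m' =>
      rw [hm, mem_act_succ] at hspec
      have hnot : v ∉ act (cycleGraph n) t s m' := Nat.find_min (hact v) (by omega)
      rcases hspec with hv | hv
      · exact absurd hv hnot
      · have := filter_adj_card_le (act (cycleGraph n) t s m') v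
        have := hsk v
        omega
  refine ⟨h1, h2, ?_⟩
  -- part 3
  intro i j hti htj hij hbet
  by_contra hcon
  push_neg at hcon
  -- every vertex in the closed arc has threshold at least k+1
  have harc : ∀ v, InArc i j v → k + 1 ≤ t v := by
    intro v hv
    rcases hv with rfl | hv | rfl
    · omega
    · have := hbet v hv
      have := h2 v
      have := hcon v hv
      omega
    · omega
  -- first activation time
  have hSne : (Finset.univ.filter (fun u => InArc i j u)).Nonempty :=
    ⟨i, mem_filter.mpr ⟨mem_univ _, Or.inl rfl⟩⟩
  obtain ⟨u, huS, hmin⟩ := Finset.exists_min_image _ (fun u => Nat.find (hact u)) hSne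
  have hu_arc : InArc i j u := (mem_filter.mp huS).2
  have hfu : u ∈ act (cycleGraph n) t s (Nat.find (hact u)) := Nat.find_spec (hact u)
  have hut : k + 1 ≤ t u := harc u hu_arc
  cases hm : Nat.find (hact u) with
  | zero =>
    rw [hm, mem_act_zero] at hfu
    have := hsk u; omega
  | succ m' =>
    rw [hm, mem_act_succ] at hfu
    have hnot : u ∉ act (cycleGraph n) t s m' := Nat.find_min (hact u) (by omega)
    rcases hfu with hv | hv
    · exact absurd hv hnot
    · -- helper: a neighbor in the arc active at time m' contradicts minimality
      have helper : ∀ w, w ∈ act (cycleGraph n) t s m' → InArc i j w → False := by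
        intro w hw hwarc
        have h1 : Nat.find (hact w) ≤ m' := Nat.find_le hw
        have h2 : Nat.find (hact u) ≤ Nat.find (hact w) :=
          hmin w (mem_filter.mpr ⟨mem_univ w, hwarc⟩)
        omega
      set c := ((act (cycleGraph n) t s m').filter
        (fun w => (cycleGraph n).Adj w u)).card with hc
      have hsu := hsk u
      have hc1 : 1 ≤ c := by omega
      rcases hu_arc with hui | hu_b | huj
      · -- u = i : threshold k+2, needs both neighbors
        have htu2 : t u = k + 2 := by rw [hui]; exact hti
        have hc2 : 2 ≤ c := by omega
        obtain ⟨_, hr⟩ := both_mem_of_two_le hn hc2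
        refine helper _ hr ?_
        rw [hui]
        exact arc_succ_left hn hij
      · -- u strictly between
        obtain ⟨w, hw⟩ := Finset.card_pos.mp (by omega : 0 < c)
        rw [mem_filter] at hw
        rcases adj_cases hw.2 with hwe | hwe
        · exact helper _ hw.1 (hwe ▸ arc_between_pred hu_b)
        · exact helper _ hw.1 (hwe ▸ arc_between_succ hu_b)
      · -- u = j
        have htu2 : t u = k + 2 := by rw [huj]; exact htj
        have hc2 : 2 ≤ c := by omega
        obtain ⟨hl, _⟩ := both_mem_of_two_le hn hc2
        refine helper _ hl ?_
        rw [huj]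
        exact arc_pred_right hn hij

end Forward

section Backward
variable {n k : ℕ} [NeZero n]

/-- the canonical link vector -/
noncomputable def lv (t : ZMod n → ℕ) (k : ℕ) : ZMod n → ℕ := fun v => min (t v) k

lemma lv_act0 (t : ZMod n → ℕ) {v : ZMod n} (h : t v ≤ k) :
    v ∈ act (cycleGraph n) t (lv t k) 0 := by
  rw [mem_act_zero]
  simp [lv]
  omega

lemma adj_pred' (hn : 3 ≤ n) (v : ZMod n) : (cycleGraph n).Adj (v - 1) v := by
  have := adj_succ hn (v - 1)
  rwa [sub_add_cancel] at this

lemma adj_succ' (hn : 3 ≤ n) (v : ZMod n) : (cycleGraph n).Adj (v + 1) v := by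
  have := adj_pred hn (v + 1)
  rwa [add_sub_cancel_right] at this

lemma lv_stepR (hn : 3 ≤ n) (t : ZMod n → ℕ) {u : ZMod n} {j : ℕ}
    (hu : u ∈ act (cycleGraph n) t (lv t k) j) (ht : t (u + 1) ≤ k + 1) :
    u + 1 ∈ act (cycleGraph n) t (lv t k) (j + 1) := by
  by_cases hk : t (u + 1) ≤ k
  · exact act_mono _ _ _ (Nat.zero_le _) (lv_act0 t hk)
  · rw [mem_act_succ]
    right
    have hcard : 1 ≤ ((act (cycleGraph n) t (lv t k) j).filter
        (fun w => (cycleGraph n).Adj w (u + 1))).card :=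
      Finset.card_pos.mpr ⟨u, mem_filter.mpr ⟨hu, adj_succ hn u⟩⟩
    simp only [lv]
    omega

lemma lv_stepL (hn : 3 ≤ n) (t : ZMod n → ℕ) {u : ZMod n} {j : ℕ}
    (hu : u ∈ act (cycleGraph n) t (lv t k) j) (ht : t (u - 1) ≤ k + 1) :
    u - 1 ∈ act (cycleGraph n) t (lv t k) (j + 1) := by
  by_cases hk : t (u - 1) ≤ k
  · exact act_mono _ _ _ (Nat.zero_le _) (lv_act0 t hk)
  · rw [mem_act_succ]
    right
    have hcard : 1 ≤ ((act (cycleGraph n) t (lv t k) j).filter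
        (fun w => (cycleGraph n).Adj w (u - 1))).card :=
      Finset.card_pos.mpr ⟨u, mem_filter.mpr ⟨hu, adj_pred hn u⟩⟩
    simp only [lv]
    omega

lemma lv_step2 (hn : 3 ≤ n) (t : ZMod n → ℕ) {v : ZMod n} {j : ℕ}
    (h1 : v - 1 ∈ act (cycleGraph n) t (lv t k) j)
    (h2 : v + 1 ∈ act (cycleGraph n) t (lv t k) j) (ht : t v ≤ k + 2) :
    v ∈ act (cycleGraph n) t (lv t k) (j + 1) := by
  by_cases hk : t v ≤ k
  · exact act_mono _ _ _ (Nat.zero_le _) (lv_act0 t hk)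
  · rw [mem_act_succ]
    right
    have hsub : ({v - 1, v + 1} : Finset (ZMod n)) ⊆
        (act (cycleGraph n) t (lv t k) j).filter (fun w => (cycleGraph n).Adj w v) := by
      intro w hw
      simp only [mem_insert, mem_singleton] at hw
      rcases hw with rfl | rfl
      · exact mem_filter.mpr ⟨h1, adj_pred' hn v⟩
      · exact mem_filter.mpr ⟨h2, adj_succ' hn v⟩
    have hpair : ({v - 1, v + 1} : Finset (ZMod n)).card = 2 := by
      rw [card_insert_of_notMem (by simp [sub_ne_add hn v]), card_singleton]
    have hcard := card_le_card hsub
    rw [hpair] at hcard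
    simp only [lv]
    omega

lemma lv_spreadR (hn : 3 ≤ n) (t : ZMod n → ℕ) (d : ℕ) (w : ZMod n)
    (hw : t w ≤ k) (hmid : ∀ m : ℕ, 1 ≤ m → m ≤ d → t (w + (m : ZMod n)) ≤ k + 1) :
    ∃ j, w + (d : ZMod n) ∈ act (cycleGraph n) t (lv t k) j := by
  induction d with
  | zero => exact ⟨0, by simpa using lv_act0 t hw⟩
  | succ d ih =>
    obtain ⟨j, hj⟩ := ih (fun m h1 h2 => hmid m h1 (by omega))
    refine ⟨j + 1, ?_⟩
    have := lv_stepR (k := k) hn t hj (by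
      have := hmid (d + 1) (by omega) le_rfl
      rwa [show ((d + 1 : ℕ) : ZMod n) = (d : ZMod n) + 1 by push_cast; ring,
        ← add_assoc] at this)
    rwa [show ((d + 1 : ℕ) : ZMod n) = (d : ZMod n) + 1 by push_cast; ring, ← add_assoc]

lemma lv_spreadL (hn : 3 ≤ n) (t : ZMod n → ℕ) (d : ℕ) (w : ZMod n)
    (hw : t w ≤ k) (hmid : ∀ m : ℕ, 1 ≤ m → m ≤ d → t (w - (m : ZMod n)) ≤ k + 1) :
    ∃ j, w - (d : ZMod n) ∈ act (cycleGraph n) t (lv t k) j := by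
  induction d with
  | zero => exact ⟨0, by simpa using lv_act0 t hw⟩
  | succ d ih =>
    obtain ⟨j, hj⟩ := ih (fun m h1 h2 => hmid m h1 (by omega))
    refine ⟨j + 1, ?_⟩
    have := lv_stepL (k := k) hn t hj (by
      have := hmid (d + 1) (by omega) le_rfl
      rwa [show ((d + 1 : ℕ) : ZMod n) = (d : ZMod n) + 1 by push_cast; ring,
        ← sub_sub] at this)
    rwa [show ((d + 1 : ℕ) : ZMod n) = (d : ZMod n) + 1 by push_cast; ring, ← sub_sub]

end Backward
section Backward2
variable {n k : ℕ} [NeZero n]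

lemma val_one' (hn : 3 ≤ n) : (1 : ZMod n).val = 1 := by
  have : ((1:ℕ) : ZMod n).val = 1 := ZMod.val_cast_of_lt (by omega)
  simpa using this

lemma no_between_succ (hn : 3 ≤ n) (v u : ZMod n) : ¬ Between v (v + 1) u := by
  rintro ⟨h1, h2⟩
  rw [show v + 1 - v = (1 : ZMod n) by ring, val_one' hn] at h2
  omega

lemma no_between_pred (hn : 3 ≤ n) (v u : ZMod n) : ¬ Between (v - 1) v u := by
  rintro ⟨h1, h2⟩
  rw [show v - (v - 1) = (1 : ZMod n) by ring, val_one' hn] at h2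
  omega

lemma no_adj_succ (hn : 3 ≤ n) {t : ZMod n → ℕ}
    (hc3 : ∀ i j : ZMod n, t i = k + 2 → t j = k + 2 → i ≠ j →
      (∀ v, Between i j v → t v ≠ k + 2) → ∃ v, Between i j v ∧ t v ≤ k)
    {v : ZMod n} (h1 : t v = k + 2) (h2 : t (v + 1) = k + 2) : False := by
  have hne : v ≠ v + 1 := by
    intro h
    exact zmod_one_ne_zero hn (by linear_combination -h)
  obtain ⟨u, hu, -⟩ := hc3 v (v + 1) h1 h2 hne
    (fun u hu => absurd hu (no_between_succ hn v u))
  exact no_between_succ hn v u hu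

lemma no_adj_pred (hn : 3 ≤ n) {t : ZMod n → ℕ}
    (hc3 : ∀ i j : ZMod n, t i = k + 2 → t j = k + 2 → i ≠ j →
      (∀ v, Between i j v → t v ≠ k + 2) → ∃ v, Between i j v ∧ t v ≤ k)
    {v : ZMod n} (h1 : t v = k + 2) (h2 : t (v - 1) = k + 2) : False := by
  have hne : v - 1 ≠ v := by
    intro h
    exact zmod_one_ne_zero hn (by linear_combination -h)
  obtain ⟨u, hu, -⟩ := hc3 (v - 1) v h2 h1 hne
    (fun u hu => absurd hu (no_between_pred hn v u))
  exact no_between_pred hn v u hu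

lemma lv_reach_le (hn : 3 ≤ n) {t : ZMod n → ℕ}
    (hc1 : ∃ v, t v ≤ k) (hc2 : ∀ v, t v ≤ k + 2)
    (hc3 : ∀ i j : ZMod n, t i = k + 2 → t j = k + 2 → i ≠ j →
      (∀ v, Between i j v → t v ≠ k + 2) → ∃ v, Between i j v ∧ t v ≤ k)
    {v : ZMod n} (htv : t v ≤ k + 1) :
    ∃ j, v ∈ act (cycleGraph n) t (lv t k) j := by
  by_cases hvk : t v ≤ k
  · exact ⟨0, lv_act0 t hvk⟩
  obtain ⟨u0, hu0⟩ := hc1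
  -- backward scan
  have hw1 : t (v - (((v - u0).val : ℕ) : ZMod n)) ≤ k ∨
      t (v - (((v - u0).val : ℕ) : ZMod n)) = k + 2 := by
    rw [show v - (((v - u0).val : ℕ) : ZMod n) = u0 by rw [cast_val']; ring]
    exact Or.inl hu0
  have hPd : ∃ d : ℕ, t (v - (d : ZMod n)) ≤ k ∨ t (v - (d : ZMod n)) = k + 2 := ⟨_, hw1⟩
  have hd := Nat.find_spec hPd
  have hdn : Nat.find hPd < n := lt_of_le_of_lt (Nat.find_le hw1) ((v - u0).val_lt)
  have hdpos : 1 ≤ Nat.find hPd := by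
    rcases Nat.eq_zero_or_pos (Nat.find hPd) with h0 | h0
    · rw [h0, Nat.cast_zero, sub_zero] at hd
      omega
    · exact h0
  have hmidB : ∀ m : ℕ, 1 ≤ m → m ≤ Nat.find hPd →
      t (v - ((Nat.find hPd : ℕ) : ZMod n) + (m : ZMod n)) ≤ k + 1 := by
    intro m h1 h2
    rw [show v - ((Nat.find hPd : ℕ) : ZMod n) + (m : ZMod n)
        = v - ((Nat.find hPd - m : ℕ) : ZMod n) by rw [Nat.cast_sub h2]; ring]
    have hlt : Nat.find hPd - m < Nat.find hPd := by omega
    have hmin := Nat.find_min hPd hlt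
    push_neg at hmin
    have := hc2 (v - ((Nat.find hPd - m : ℕ) : ZMod n))
    omega
  rcases hd with hseed | hk2
  · obtain ⟨j, hj⟩ := lv_spreadR hn t (Nat.find hPd) (v - ((Nat.find hPd : ℕ) : ZMod n))
      hseed hmidB
    rw [sub_add_cancel] at hj
    exact ⟨j, hj⟩
  -- forward scan
  have hw2 : t (v + (((u0 - v).val : ℕ) : ZMod n)) ≤ k ∨
      t (v + (((u0 - v).val : ℕ) : ZMod n)) = k + 2 := by
    rw [show v + (((u0 - v).val : ℕ) : ZMod n) = u0 by rw [cast_val']; ring]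
    exact Or.inl hu0
  have hPe : ∃ e : ℕ, t (v + (e : ZMod n)) ≤ k ∨ t (v + (e : ZMod n)) = k + 2 := ⟨_, hw2⟩
  have he := Nat.find_spec hPe
  have hen : Nat.find hPe < n := lt_of_le_of_lt (Nat.find_le hw2) ((u0 - v).val_lt)
  have hepos : 1 ≤ Nat.find hPe := by
    rcases Nat.eq_zero_or_pos (Nat.find hPe) with h0 | h0
    · rw [h0, Nat.cast_zero, add_zero] at he
      omega
    · exact h0
  have hmidF : ∀ m : ℕ, 1 ≤ m → m ≤ Nat.find hPe →
      t (v + ((Nat.find hPe : ℕ) : ZMod n) - (m : ZMod n)) ≤ k + 1 := by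
    intro m h1 h2
    rw [show v + ((Nat.find hPe : ℕ) : ZMod n) - (m : ZMod n)
        = v + ((Nat.find hPe - m : ℕ) : ZMod n) by rw [Nat.cast_sub h2]; ring]
    have hlt : Nat.find hPe - m < Nat.find hPe := by omega
    have hmin := Nat.find_min hPe hlt
    push_neg at hmin
    have := hc2 (v + ((Nat.find hPe - m : ℕ) : ZMod n))
    omega
  rcases he with hseed | hk2'
  · obtain ⟨j, hj⟩ := lv_spreadL hn t (Nat.find hPe) (v + ((Nat.find hPe : ℕ) : ZMod n))
      hseed hmidF
    rw [add_sub_cancel_right] at hj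
    exact ⟨j, hj⟩
  -- both ends of the scan are k+2 vertices: contradiction
  exfalso
  by_cases hij : (v - ((Nat.find hPd : ℕ) : ZMod n)) = v + ((Nat.find hPe : ℕ) : ZMod n)
  · -- same vertex: then all other vertices have threshold k+1, contradicting hc1
    have hdvd : n ∣ (Nat.find hPd + Nat.find hPe) := by
      have hz : ((Nat.find hPd + Nat.find hPe : ℕ) : ZMod n) = 0 := by
        push_cast
        linear_combination -hij
      exact (ZMod.natCast_eq_zero_iff ..).mp hz
    obtain ⟨c, hcc⟩ := hdvd
    have hc1' : c = 1 := by
      rcases c with _ | _ | c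
      · omega
      · rfl
      · exfalso
        have : n * (c + 1 + 1) ≥ n * 2 := Nat.mul_le_mul_left n (by omega)
        omega
    rw [hc1', mul_one] at hcc
    -- locate u0
    have ha := (u0 - v).val_lt
    rcases lt_trichotomy ((u0 - v).val) (Nat.find hPe) with hlt | heq | hgt
    · have hmin := Nat.find_min hPe hlt
      rw [show v + (((u0 - v).val : ℕ) : ZMod n) = u0 by rw [cast_val']; ring] at hmin
      push_neg at hmin
      omega
    · rw [show v + ((Nat.find hPe : ℕ) : ZMod n) = u0 by
        rw [← heq, cast_val']; ring] at hk2'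
      omega
    · have hblt : n - (u0 - v).val < Nat.find hPd := by omega
      have hmin := Nat.find_min hPd hblt
      rw [show v - ((n - (u0 - v).val : ℕ) : ZMod n) = u0 by
        rw [Nat.cast_sub (le_of_lt ha), ZMod.natCast_self, cast_val']; ring] at hmin
      push_neg at hmin
      omega
  · -- two distinct consecutive k+2 vertices: no seed between, contradicting hc3
    have hbetk1 : ∀ u, Between (v - ((Nat.find hPd : ℕ) : ZMod n))
        (v + ((Nat.find hPe : ℕ) : ZMod n)) u → t u = k + 1 := by
      intro u hu
      obtain ⟨hb1, hb2⟩ := hu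
      have hub : u = v - ((Nat.find hPd : ℕ) : ZMod n)
          + (((u - (v - ((Nat.find hPd : ℕ) : ZMod n))).val : ℕ) : ZMod n) := by
        rw [cast_val']; ring
      have haval : ((v + ((Nat.find hPe : ℕ) : ZMod n))
          - (v - ((Nat.find hPd : ℕ) : ZMod n))).val ≤ Nat.find hPd + Nat.find hPe := by
        rw [show (v + ((Nat.find hPe : ℕ) : ZMod n)) - (v - ((Nat.find hPd : ℕ) : ZMod n))
            = ((Nat.find hPd + Nat.find hPe : ℕ) : ZMod n) by push_cast; ring,
          ZMod.val_natCast]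
        exact Nat.mod_le _ _
      set b := (u - (v - ((Nat.find hPd : ℕ) : ZMod n))).val with hbdef
      by_cases hbd : b ≤ Nat.find hPd
      · have hue : u = v - ((Nat.find hPd - b : ℕ) : ZMod n) := by
          rw [Nat.cast_sub hbd]
          rw [hub]; ring
        have hlt : Nat.find hPd - b < Nat.find hPd := by omega
        have hmin := Nat.find_min hPd hlt
        push_neg at hmin
        rw [← hue] at hmin
        have := hc2 u
        omega
      · have hue : u = v + ((b - Nat.find hPd : ℕ) : ZMod n) := by
          rw [Nat.cast_sub (by omega)]
          rw [hub]; ring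
        have hlt : b - Nat.find hPd < Nat.find hPe := by omega
        have hmin := Nat.find_min hPe hlt
        push_neg at hmin
        rw [← hue] at hmin
        have := hc2 u
        omega
    obtain ⟨u, hu, huk⟩ := hc3 _ _ hk2 hk2' hij (fun u hu => by rw [hbetk1 u hu]; omega)
    have := hbetk1 u hu
    omega

end Backward2

section Final
variable {n k : ℕ} [NeZero n]

lemma lv_reach (hn : 3 ≤ n) {t : ZMod n → ℕ}
    (hc1 : ∃ v, t v ≤ k) (hc2 : ∀ v, t v ≤ k + 2)
    (hc3 : ∀ i j : ZMod n, t i = k + 2 → t j = k + 2 → i ≠ j →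
      (∀ v, Between i j v → t v ≠ k + 2) → ∃ v, Between i j v ∧ t v ≤ k) :
    ∀ v, ∃ j, v ∈ act (cycleGraph n) t (lv t k) j := by
  intro v
  by_cases hv : t v = k + 2
  · have h1 : t (v - 1) ≤ k + 1 := by
      have hne : t (v - 1) ≠ k + 2 := fun h => no_adj_pred hn hc3 hv h
      have := hc2 (v - 1)
      omega
    have h2 : t (v + 1) ≤ k + 1 := by
      have hne : t (v + 1) ≠ k + 2 := fun h => no_adj_succ hn hc3 hv h
      have := hc2 (v + 1)
      omega
    obtain ⟨j1, hj1⟩ := lv_reach_le hn hc1 hc2 hc3 h1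
    obtain ⟨j2, hj2⟩ := lv_reach_le hn hc1 hc2 hc3 h2
    exact ⟨max j1 j2 + 1, lv_step2 hn t (act_mono _ _ _ (le_max_left j1 j2) hj1)
      (act_mono _ _ _ (le_max_right j1 j2) hj2) (hc2 v)⟩
  · have hle : t v ≤ k + 1 := by
      have := hc2 v
      omega
    exact lv_reach_le hn hc1 hc2 hc3 hle

end Final

theorem cycle_pervading_iff (n k : ℕ) [NeZero n] (hn : 3 ≤ n) (t : ZMod n → ℕ) :
    (∃ s, Pervading (cycleGraph n) t s k) ↔
      ((∃ v, t v ≤ k) ∧ (∀ v, t v ≤ k + 2) ∧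
        (∀ i j : ZMod n, t i = k + 2 → t j = k + 2 → i ≠ j →
          (∀ v, Between i j v → t v ≠ k + 2) →
          ∃ v, Between i j v ∧ t v ≤ k)) := by
  constructor
  · rintro ⟨s, hs, j₀, hj₀⟩
    exact forward_dir hn t s hs j₀ hj₀
  · rintro ⟨hc1, hc2, hc3⟩
    refine ⟨lv t k, fun v => min_le_right _ _, ?_⟩
    have h := lv_reach hn hc1 hc2 hc3
    refine ⟨Finset.univ.sup (fun v => Nat.find (h v)), ?_⟩
    rw [Finset.eq_univ_iff_forall]
    intro v
    exact act_mono _ _ _ (Finset.le_sup (mem_univ v)) (Nat.find_spec (h v))
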